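/- Let K be an ordinary difference field and K{y} the ring of difference polynomials in one indeterminate. With u^(n) = y_{n+2^n−1} y_{n+2^{n+1}−1} and A^(i) = u^(2i−2) + u^(2i−1) for i ≥ 1, fix m ≥ 1 and let S = {A^(1), …, A^(m)}. Then every homogeneous difference polynomial of degree 2 lying in the difference ideal [S] is irreducible in K{y}. -/

import Mathlib

open MvPolynomial

def sigmaSpan {R : Type*} [CommRing R] (σ : R →+* R) (S : Set R) : Ideal R :=
  Ideal.span {x | ∃ a ∈ S, ∃ k : ℕ, x = (⇑σ)^[k] a}

noncomputable def shift {K : Type*} [Field K] (σK : K →+* K) :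
    MvPolynomial ℕ K →+* MvPolynomial ℕ K :=
  eval₂Hom (MvPolynomial.C.comp σK) (fun n => MvPolynomial.X (n + 1))

/-- The term `u⁽ⁿ⁾ = y_{n+2ⁿ−1} · y_{n+2ⁿ⁺¹−1}` in `K{y}`. -/
noncomputable def uPoly (K : Type*) [Field K] (n : ℕ) : MvPolynomial ℕ K :=
  X (n + 2 ^ n - 1) * X (n + 2 ^ (n + 1) - 1)

/-- `A⁽ⁱ⁾ = u⁽²ⁱ⁻²⁾ + u⁽²ⁱ⁻¹⁾` for `i ≥ 1`. -/
noncomputable def APoly (K : Type*) [Field K] (i : ℕ) : MvPolynomial ℕ K :=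
  uPoly K (2 * i - 2) + uPoly K (2 * i - 1)

/-! ### Combinatorics of exponent vectors -/

/-- The exponent vector of the monomial `σᵏ(u⁽ⁿ⁾)`. -/
noncomputable def Mon (n k : ℕ) : ℕ →₀ ℕ :=
  Finsupp.single (n + 2 ^ n - 1 + k) 1 + Finsupp.single (n + 2 ^ (n + 1) - 1 + k) 1

lemma Mon_def (n k : ℕ) : Mon n k =
    Finsupp.single (n + 2 ^ n - 1 + k) 1 + Finsupp.single (n + 2 ^ (n + 1) - 1 + k) 1 := rfl

lemma mon_idx (n k : ℕ) :
    n + 2 ^ n - 1 + k + 2 ^ n = n + 2 ^ (n + 1) - 1 + k := by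
  have h : 1 ≤ 2 ^ n := Nat.one_le_two_pow
  rw [pow_succ]
  omega

lemma pow_ne_two_mul_add_one (n v : ℕ) (hv : 1 ≤ v) : 2 ^ n ≠ 2 * v + 1 := by
  cases n with
  | zero => simpa using by omega
  | succ m => rw [pow_succ]; omega

lemma pair_fs (x y : ℕ) :
    (Finsupp.single x 1 + Finsupp.single y 1 : ℕ →₀ ℕ) = Multiset.toFinsupp {x, y} := by
  rw [show ({x, y} : Multiset ℕ) = {x} + {y} by rw [Multiset.singleton_add]; rfl]
  rw [map_add, Multiset.toFinsupp_singleton, Multiset.toFinsupp_singleton]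

lemma multiset_pair_eq {s t x y : ℕ} (h : ({s, t} : Multiset ℕ) = {x, y}) :
    (s = x ∧ t = y) ∨ (s = y ∧ t = x) := by
  rcases Multiset.cons_eq_cons.mp h with ⟨h1, h2⟩ | ⟨hne, cs, h2, h3⟩
  · exact Or.inl ⟨h1, Multiset.singleton_inj.mp h2⟩
  · obtain ⟨hty, hcs⟩ := (Multiset.singleton_eq_cons_iff _).mp h2
    subst hcs
    obtain ⟨hyx, -⟩ := (Multiset.singleton_eq_cons_iff _).mp h3
    exact Or.inr ⟨hyx.symm, hty⟩

lemma pair_pair {s t x y : ℕ}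
    (h : (Finsupp.single s 1 + Finsupp.single t 1 : ℕ →₀ ℕ)
        = Finsupp.single x 1 + Finsupp.single y 1) :
    (s = x ∧ t = y) ∨ (s = y ∧ t = x) := by
  rw [pair_fs, pair_fs] at h
  exact multiset_pair_eq (Multiset.toFinsupp.injective h)

lemma pair_eq {x y x' y' : ℕ} (hxy : x < y) (hxy' : x' < y')
    (h : (Finsupp.single x 1 + Finsupp.single y 1 : ℕ →₀ ℕ)
        = Finsupp.single x' 1 + Finsupp.single y' 1) :
    x = x' ∧ y = y' := by
  rcases pair_pair h with ⟨h1, h2⟩ | ⟨h1, h2⟩ <;> omega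

lemma pair_sq {s t x : ℕ}
    (h : (Finsupp.single s 1 + Finsupp.single t 1 : ℕ →₀ ℕ) = Finsupp.single x 2) :
    s = x ∧ t = x := by
  have h2 : (Finsupp.single x 2 : ℕ →₀ ℕ) = Finsupp.single x 1 + Finsupp.single x 1 := by
    rw [← Finsupp.single_add]
  rw [h2] at h
  rcases pair_pair h with ⟨h1, h2⟩ | ⟨h1, h2⟩ <;> exact ⟨h1, h2⟩

lemma degree_single (s n : ℕ) : Finsupp.degree (Finsupp.single s n) = n := by
  rcases eq_or_ne n 0 with rfl | h
  · simp [Finsupp.degree]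
  · exact Finsupp.degree_single s n

lemma degree_add (u v : ℕ →₀ ℕ) :
    Finsupp.degree (u + v) = Finsupp.degree u + Finsupp.degree v := by
  simp [Finsupp.degree_eq_weight_one, map_add]

lemma Mon_degree (n k : ℕ) : Finsupp.degree (Mon n k) = 2 := by
  rw [Mon_def, degree_add, degree_single, degree_single]

lemma Mon_inj {n k n' k' : ℕ} (h : Mon n k = Mon n' k') : n = n' ∧ k = k' := by
  have h1 := mon_idx n k
  have h2 := mon_idx n' k'
  have hp : 1 ≤ 2 ^ n := Nat.one_le_two_pow
  have hp' : 1 ≤ 2 ^ n' := Nat.one_le_two_pow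
  rw [Mon_def, Mon_def] at h
  obtain ⟨e1, e2⟩ := pair_eq (by omega) (by omega) h
  have hpow : 2 ^ n = 2 ^ n' := by omega
  have hn : n = n' := Nat.pow_right_injective (le_refl 2) hpow
  exact ⟨hn, by omega⟩

lemma eq_single_of_degree_one {u : ℕ →₀ ℕ} (h : Finsupp.degree u = 1) :
    ∃ s, u = Finsupp.single s 1 := by
  have hcard : Multiset.card (Finsupp.toMultiset u) = 1 := by
    rw [Finsupp.card_toMultiset]
    exact h
  obtain ⟨a, ha⟩ := Multiset.card_eq_one.mp hcard
  refine ⟨a, ?_⟩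
  have := congrArg Multiset.toFinsupp ha
  rwa [Finsupp.toMultiset_toFinsupp, Multiset.toFinsupp_singleton] at this

/-! ### Shifts of the generators -/

section ShiftLemmas

variable {K : Type*} [Field K]

lemma shift_X (σK : K →+* K) (n : ℕ) : shift σK (X n) = X (n + 1) := by
  simp [shift]

lemma shift_iter_pair (σK : K →+* K) (k s t u v : ℕ) :
    (⇑(shift σK))^[k] (X s * X t + X u * X v : MvPolynomial ℕ K)
      = X (s + k) * X (t + k) + X (u + k) * X (v + k) := by
  induction k with
  | zero => simp
  | succ k ih =>
    rw [Function.iterate_succ_apply', ih]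
    simp only [map_add, map_mul, shift_X]
    rfl

lemma X_mul_X_eq (s t : ℕ) : (X s * X t : MvPolynomial ℕ K) =
    monomial (Finsupp.single s 1 + Finsupp.single t 1) 1 := by
  rw [show (X s : MvPolynomial ℕ K) = monomial (Finsupp.single s 1) 1 from rfl,
    show (X t : MvPolynomial ℕ K) = monomial (Finsupp.single t 1) 1 from rfl,
    monomial_mul, one_mul]

lemma gen_shape (σK : K →+* K) (i k : ℕ) (hi : 1 ≤ i) :
    (⇑(shift σK))^[k] (APoly K i)
      = monomial (Mon (2 * i - 2) k) 1 + monomial (Mon (2 * i - 2 + 1) k) 1 := by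
  have h21 : 2 * i - 1 = 2 * i - 2 + 1 := by omega
  rw [APoly, uPoly, uPoly, h21, shift_iter_pair, X_mul_X_eq, X_mul_X_eq]
  rfl

lemma coeff_mul_gen (p : MvPolynomial ℕ K) {D M1 M2 : ℕ →₀ ℕ}
    (hD : D.degree = 2) (h1 : M1.degree = 2) (h2 : M2.degree = 2) :
    coeff D (p * (monomial M1 1 + monomial M2 1))
      = (if D = M1 then coeff 0 p else 0) + (if D = M2 then coeff 0 p else 0) := by
  have key : ∀ M : ℕ →₀ ℕ, M.degree = 2 →
      coeff D (p * monomial M 1) = if D = M then coeff 0 p else 0 := by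
    intro M hM
    rw [coeff_mul_monomial']
    rcases eq_or_ne D M with rfl | hne
    · simp
    · rw [if_neg hne, if_neg]
      intro hle
      obtain ⟨e, rfl⟩ := le_iff_exists_add.mp hle
      rw [degree_add, hM] at hD
      have he : e = 0 := (Finsupp.degree_eq_zero_iff e).mp (by omega)
      exact hne (by rw [he, add_zero])
  rw [mul_add, coeff_add, key M1 h1, key M2 h2]

end ShiftLemmas

/-! ### The dilation homomorphism and homogeneity of factors -/

noncomputable def Phi (K : Type*) [Field K] :
    MvPolynomial ℕ K →+* Polynomial (MvPolynomial ℕ K) :=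
  eval₂Hom (Polynomial.C.comp C) fun i => Polynomial.C (X i) * Polynomial.X

section PhiLemmas

variable {K : Type*} [Field K]

lemma Phi_monomial (d : ℕ →₀ ℕ) (c : K) :
    Phi K (monomial d c) = Polynomial.monomial (Finsupp.degree d) (monomial d c) := by
  rw [Phi, eval₂Hom_monomial]
  have step : (d.prod fun n e => (Polynomial.C (X n : MvPolynomial ℕ K) * Polynomial.X) ^ e)
      = Polynomial.C (d.prod fun n e => (X n : MvPolynomial ℕ K) ^ e)
        * Polynomial.X ^ Finsupp.degree d := by
    rw [Finsupp.prod, Finsupp.prod]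
    simp_rw [mul_pow, ← Polynomial.C_pow]
    rw [Finset.prod_mul_distrib, ← map_prod, Finset.prod_pow_eq_pow_sum]
    rfl
  rw [step, RingHom.comp_apply, ← mul_assoc, ← map_mul, ← monomial_eq,
    Polynomial.C_mul_X_pow_eq_monomial]

lemma Phi_coeff_isHomogeneous (p : MvPolynomial ℕ K) (n : ℕ) :
    ((Phi K p).coeff n).IsHomogeneous n := by
  induction p using MvPolynomial.induction_on' with
  | monomial d c =>
    rw [Phi_monomial, Polynomial.coeff_monomial]
    split_ifs with h
    · exact isHomogeneous_monomial _ h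
    · exact isHomogeneous_zero _ _ _
  | add p q hp hq =>
    rw [map_add, Polynomial.coeff_add]
    exact hp.add hq

lemma Phi_homog {p : MvPolynomial ℕ K} {n : ℕ} (hp : p.IsHomogeneous n) :
    Phi K p = Polynomial.monomial n p := by
  have step : Phi K p = ∑ d ∈ p.support, Polynomial.monomial n (monomial d (coeff d p)) := by
    conv_lhs => rw [p.as_sum]
    rw [map_sum]
    refine Finset.sum_congr rfl fun d hd => ?_
    rw [Phi_monomial]
    have hdn : Finsupp.degree d = n := by
      rw [Finsupp.degree_eq_weight_one]
      exact hp (mem_support_iff.mp hd)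
    rw [hdn]
  rw [step, ← map_sum, ← p.as_sum]

lemma Phi_eval (p : MvPolynomial ℕ K) : Polynomial.eval 1 (Phi K p) = p := by
  have hcomp : (Polynomial.evalRingHom (1 : MvPolynomial ℕ K)).comp (Phi K)
      = RingHom.id (MvPolynomial ℕ K) := by
    apply MvPolynomial.ringHom_ext
    · intro a; simp [Phi]
    · intro i; simp [Phi]
  exact RingHom.congr_fun hcomp p

lemma factor_homog {f g h : MvPolynomial ℕ K} (hf2 : f.IsHomogeneous 2) (hf0 : f ≠ 0)
    (hgh : f = g * h) (hgu : ¬IsUnit g) (hhu : ¬IsUnit h) :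
    g.IsHomogeneous 1 ∧ h.IsHomogeneous 1 := by
  classical
  have hPf : Phi K f = Polynomial.monomial 2 f := Phi_homog hf2
  have hg0 : (Phi K g) ≠ 0 := by
    intro h0
    apply hf0
    have := Phi_eval g
    rw [h0] at this
    simp only [Polynomial.eval_zero] at this
    rw [hgh, ← this, zero_mul]
  have hh0 : (Phi K h) ≠ 0 := by
    intro h0
    apply hf0
    have := Phi_eval h
    rw [h0] at this
    simp only [Polynomial.eval_zero] at this
    rw [hgh, ← this, mul_zero]
  have hmul : Phi K g * Phi K h = Polynomial.monomial 2 f := by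
    rw [← hPf, hgh, map_mul]
  have hndeg : (Phi K g).natDegree + (Phi K h).natDegree = 2 := by
    rw [← Polynomial.natDegree_mul hg0 hh0, hmul, Polynomial.natDegree_monomial, if_neg hf0]
  have htdeg : (Phi K g).natTrailingDegree + (Phi K h).natTrailingDegree = 2 := by
    rw [← Polynomial.natTrailingDegree_mul hg0 hh0, hmul,
      Polynomial.natTrailingDegree_monomial hf0]
  have hle1 := Polynomial.natTrailingDegree_le_natDegree (Phi K g)
  have hle2 := Polynomial.natTrailingDegree_le_natDegree (Phi K h)
  have key0 : ∀ p : MvPolynomial ℕ K, ¬IsUnit p → p ≠ 0 → (Phi K p).natDegree ≠ 0 := by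
    intro p hpu hp0 hdeg
    apply hpu
    have hPC : Phi K p = Polynomial.C ((Phi K p).coeff 0) :=
      Polynomial.eq_C_of_natDegree_eq_zero hdeg
    have hp_eq : p = (Phi K p).coeff 0 := by
      conv_lhs => rw [← Phi_eval p, hPC]
      rw [Polynomial.eval_C]
    have hhom0 : p.IsHomogeneous 0 := hp_eq ▸ Phi_coeff_isHomogeneous p 0
    have hpc : p = C (coeff 0 p) := by
      ext d
      rcases eq_or_ne d 0 with rfl | hd
      · simp
      · rw [hhom0.coeff_eq_zero (by
          intro hdeg0
          exact hd ((Finsupp.degree_eq_zero_iff d).mp hdeg0)), coeff_C, if_neg (Ne.symm hd)]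
    rw [hpc]
    have : coeff 0 p ≠ 0 := by
      intro hc
      apply hp0
      rw [hpc, hc, map_zero]
    exact (IsUnit.mk0 _ this).map (C : K →+* MvPolynomial ℕ K)
  have hgne : g ≠ 0 := fun h0 => hf0 (by rw [hgh, h0, zero_mul])
  have hhne : h ≠ 0 := fun h0 => hf0 (by rw [hgh, h0, mul_zero])
  have hg1 : (Phi K g).natDegree = 1 := by
    have := key0 g hgu hgne
    have := key0 h hhu hhne
    omega
  have hh1 : (Phi K h).natDegree = 1 := by
    have := key0 g hgu hgne
    have := key0 h hhu hhne
    omega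
  have hgt1 : (Phi K g).natTrailingDegree = 1 := by omega
  have hht1 : (Phi K h).natTrailingDegree = 1 := by omega
  have extract : ∀ p : MvPolynomial ℕ K, (Phi K p).natDegree = 1 →
      (Phi K p).natTrailingDegree = 1 → p.IsHomogeneous 1 := by
    intro p hd ht
    have hmono : Phi K p = Polynomial.monomial 1 ((Phi K p).coeff 1) := by
      refine Polynomial.ext fun m => ?_
      rw [Polynomial.coeff_monomial]
      rcases lt_trichotomy m 1 with hm | rfl | hm
      · rw [if_neg (by omega)]
        have hlt : m < (Phi K p).natTrailingDegree := by omega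
        exact Polynomial.coeff_eq_zero_of_lt_natTrailingDegree hlt
      · rw [if_pos rfl]
      · rw [if_neg (by omega)]
        have hlt : (Phi K p).natDegree < m := by omega
        exact Polynomial.coeff_eq_zero_of_natDegree_lt hlt
    have hp_eq : p = (Phi K p).coeff 1 := by
      conv_lhs => rw [← Phi_eval p, hmono]
      simp
    exact hp_eq ▸ Phi_coeff_isHomogeneous p 1
  exact ⟨extract g hg1 hgt1, extract h hh1 hht1⟩

/-! ### Coefficients of a product of two linear homogeneous polynomials -/

lemma coeff_mul_hom1_pair {g h : MvPolynomial ℕ K} (hg1 : g.IsHomogeneous 1)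
    (hh1 : h.IsHomogeneous 1) {x y : ℕ} (hxy : x ≠ y) :
    coeff (Finsupp.single x 1 + Finsupp.single y 1) (g * h)
      = coeff (Finsupp.single x 1) g * coeff (Finsupp.single y 1) h
        + coeff (Finsupp.single y 1) g * coeff (Finsupp.single x 1) h := by
  classical
  rw [coeff_mul]
  have hpairne : ((Finsupp.single x 1, Finsupp.single y 1) : (ℕ →₀ ℕ) × (ℕ →₀ ℕ))
      ≠ (Finsupp.single y 1, Finsupp.single x 1) := by
    intro hcontra
    exact hxy (Finsupp.single_left_injective one_ne_zero (congrArg Prod.fst hcontra))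
  have hsub : ({(Finsupp.single x 1, Finsupp.single y 1),
        (Finsupp.single y 1, Finsupp.single x 1)} : Finset ((ℕ →₀ ℕ) × (ℕ →₀ ℕ)))
      ⊆ Finset.HasAntidiagonal.antidiagonal (Finsupp.single x 1 + Finsupp.single y 1) := by
    intro p hp
    rcases Finset.mem_insert.mp hp with rfl | hp
    · exact Finset.HasAntidiagonal.mem_antidiagonal.mpr rfl
    · rw [Finset.mem_singleton.mp hp]
      exact Finset.HasAntidiagonal.mem_antidiagonal.mpr (add_comm _ _)
  have hzero : ∀ p ∈ Finset.HasAntidiagonal.antidiagonal (Finsupp.single x 1 + Finsupp.single y 1),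
      p ∉ ({(Finsupp.single x 1, Finsupp.single y 1),
        (Finsupp.single y 1, Finsupp.single x 1)} : Finset ((ℕ →₀ ℕ) × (ℕ →₀ ℕ))) →
      coeff p.1 g * coeff p.2 h = 0 := by
    intro p hp hnot
    by_contra hne
    have hu : coeff p.1 g ≠ 0 := fun hh => hne (by rw [hh, zero_mul])
    have hv : coeff p.2 h ≠ 0 := fun hh => hne (by rw [hh, mul_zero])
    have hdu : Finsupp.degree p.1 = 1 := by
      rw [Finsupp.degree_eq_weight_one]; exact hg1 hu
    have hdv : Finsupp.degree p.2 = 1 := by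
      rw [Finsupp.degree_eq_weight_one]; exact hh1 hv
    obtain ⟨s, hs⟩ := eq_single_of_degree_one hdu
    obtain ⟨t, ht⟩ := eq_single_of_degree_one hdv
    have hadd : Finsupp.single s 1 + Finsupp.single t 1
        = Finsupp.single x 1 + Finsupp.single y 1 := by
      rw [← hs, ← ht]; exact Finset.HasAntidiagonal.mem_antidiagonal.mp hp
    apply hnot
    rcases pair_pair hadd with ⟨e1, e2⟩ | ⟨e1, e2⟩
    · have hpe : p = (Finsupp.single x 1, Finsupp.single y 1) :=
        Prod.ext (by rw [hs, e1]) (by rw [ht, e2])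
      rw [hpe]; exact Finset.mem_insert_self _ _
    · have hpe : p = (Finsupp.single y 1, Finsupp.single x 1) :=
        Prod.ext (by rw [hs, e1]) (by rw [ht, e2])
      rw [hpe]; exact Finset.mem_insert_of_mem (Finset.mem_singleton_self _)
  rw [← Finset.sum_subset hsub hzero, Finset.sum_pair hpairne]

lemma coeff_mul_hom1_sq {g h : MvPolynomial ℕ K} (hg1 : g.IsHomogeneous 1)
    (hh1 : h.IsHomogeneous 1) (x : ℕ) :
    coeff (Finsupp.single x 2) (g * h)
      = coeff (Finsupp.single x 1) g * coeff (Finsupp.single x 1) h := by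
  classical
  rw [coeff_mul]
  have hsub : ({(Finsupp.single x 1, Finsupp.single x 1)} : Finset ((ℕ →₀ ℕ) × (ℕ →₀ ℕ)))
      ⊆ Finset.HasAntidiagonal.antidiagonal (Finsupp.single x 2) := by
    intro p hp
    rw [Finset.mem_singleton.mp hp]
    refine Finset.HasAntidiagonal.mem_antidiagonal.mpr ?_
    rw [← Finsupp.single_add]
  have hzero : ∀ p ∈ Finset.HasAntidiagonal.antidiagonal (Finsupp.single x 2),
      p ∉ ({(Finsupp.single x 1, Finsupp.single x 1)} : Finset ((ℕ →₀ ℕ) × (ℕ →₀ ℕ))) →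
      coeff p.1 g * coeff p.2 h = 0 := by
    intro p hp hnot
    by_contra hne
    have hu : coeff p.1 g ≠ 0 := fun hh => hne (by rw [hh, zero_mul])
    have hv : coeff p.2 h ≠ 0 := fun hh => hne (by rw [hh, mul_zero])
    have hdu : Finsupp.degree p.1 = 1 := by
      rw [Finsupp.degree_eq_weight_one]; exact hg1 hu
    have hdv : Finsupp.degree p.2 = 1 := by
      rw [Finsupp.degree_eq_weight_one]; exact hh1 hv
    obtain ⟨s, hs⟩ := eq_single_of_degree_one hdu
    obtain ⟨t, ht⟩ := eq_single_of_degree_one hdv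
    have hadd : Finsupp.single s 1 + Finsupp.single t 1 = Finsupp.single x 2 := by
      rw [← hs, ← ht]; exact Finset.HasAntidiagonal.mem_antidiagonal.mp hp
    obtain ⟨e1, e2⟩ := pair_sq hadd
    apply hnot
    have hpe : p = (Finsupp.single x 1, Finsupp.single x 1) :=
      Prod.ext (by rw [hs, e1]) (by rw [ht, e2])
    rw [hpe]; exact Finset.mem_singleton_self _
  rw [← Finset.sum_subset hsub hzero, Finset.sum_singleton]

end PhiLemmas

theorem stmt_10 {K : Type*} [Field K] (σK : K →+* K) (m : ℕ) (hm : 1 ≤ m)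
    (f : MvPolynomial ℕ K)
    (hf : f ∈ sigmaSpan (shift σK) {g | ∃ i, 1 ≤ i ∧ i ≤ m ∧ g = APoly K i})
    (hhom : f.IsHomogeneous 2) (hf0 : f ≠ 0) :
    Irreducible f := by
  classical
  rw [sigmaSpan] at hf
  obtain ⟨c, hsupp, hsum⟩ := Submodule.mem_span_set.mp hf
  have hsum' : f = ∑ x ∈ c.support, c x * x := by
    rw [← hsum, Finsupp.sum]
    exact Finset.sum_congr rfl fun x _ => rfl
  have hgen : ∀ x ∈ c.support, ∃ n k : ℕ, n % 2 = 0 ∧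
      x = monomial (Mon n k) 1 + monomial (Mon (n + 1) k) 1 := by
    intro x hx
    obtain ⟨a, ha, k, rfl⟩ := hsupp hx
    obtain ⟨i, hi1, _, rfl⟩ := ha
    exact ⟨2 * i - 2, k, by omega, gen_shape σK i k hi1⟩
  have hcoeff : ∀ D : ℕ →₀ ℕ, coeff D f = ∑ x ∈ c.support, coeff D (c x * x) := by
    intro D
    rw [hsum', coeff_sum]
  have factA : ∀ D : ℕ →₀ ℕ, coeff D f ≠ 0 → ∃ n k, D = Mon n k := by
    intro D hD0
    have hdeg : D.degree = 2 := by
      rw [Finsupp.degree_eq_weight_one]; exact hhom hD0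
    rw [hcoeff D] at hD0
    obtain ⟨x, hx, hne⟩ := Finset.exists_ne_zero_of_sum_ne_zero hD0
    obtain ⟨n, k, hpar, rfl⟩ := hgen x hx
    rw [coeff_mul_gen _ hdeg (Mon_degree n k) (Mon_degree (n + 1) k)] at hne
    by_cases h1 : D = Mon n k
    · exact ⟨n, k, h1⟩
    by_cases h2 : D = Mon (n + 1) k
    · exact ⟨n + 1, k, h2⟩
    rw [if_neg h1, if_neg h2, add_zero] at hne
    exact absurd rfl hne
  have factB : ∀ n k : ℕ, n % 2 = 0 → coeff (Mon n k) f = coeff (Mon (n + 1) k) f := by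
    intro n k hpar
    rw [hcoeff, hcoeff]
    refine Finset.sum_congr rfl fun x hx => ?_
    obtain ⟨n', k', hpar', rfl⟩ := hgen x hx
    rw [coeff_mul_gen _ (Mon_degree n k) (Mon_degree n' k') (Mon_degree (n' + 1) k'),
      coeff_mul_gen _ (Mon_degree (n + 1) k) (Mon_degree n' k') (Mon_degree (n' + 1) k')]
    have c2 : Mon n k ≠ Mon (n' + 1) k' := fun hh => by
      have := Mon_inj hh; omega
    have c3 : Mon (n + 1) k ≠ Mon n' k' := fun hh => by
      have := Mon_inj hh; omega
    have c1 : (Mon n k = Mon n' k') ↔ (Mon (n + 1) k = Mon (n' + 1) k') := by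
      constructor
      · intro hh
        obtain ⟨e1, e2⟩ := Mon_inj hh
        subst e1; subst e2; rfl
      · intro hh
        obtain ⟨e1, e2⟩ := Mon_inj hh
        have e1' : n = n' := by omega
        subst e1'; subst e2; rfl
    rw [if_neg c2, if_neg c3, add_zero, zero_add]
    exact if_congr c1 rfl rfl
  constructor
  · intro hu
    have h2 : (Phi K f).natDegree = 2 := by
      rw [Phi_homog hhom, Polynomial.natDegree_monomial, if_neg hf0]
    have h0 := Polynomial.natDegree_eq_zero_of_isUnit (hu.map (Phi K))
    omega
  · intro g h hgh
    by_contra hcon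
    push_neg at hcon
    obtain ⟨hg1, hh1⟩ := factor_homog hhom hf0 hgh hcon.1 hcon.2
    have hsq : ∀ s : ℕ, coeff (Finsupp.single s 1) h ≠ 0 → coeff (Finsupp.single s 1) g = 0 := by
      intro s hBs
      have h0 : coeff (Finsupp.single s 2) f = 0 := by
        by_contra hne
        obtain ⟨n, k, hD⟩ := factA _ hne
        rw [Mon_def] at hD
        obtain ⟨e1, e2⟩ := pair_sq hD.symm
        have hidx := mon_idx n k
        have h1 : (1 : ℕ) ≤ 2 ^ n := Nat.one_le_two_pow
        omega
      rw [hgh, coeff_mul_hom1_sq hg1 hh1] at h0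
      exact (mul_eq_zero.mp h0).resolve_right hBs
    have edge : ∀ x y : ℕ, x ≠ y → coeff (Finsupp.single x 1) g ≠ 0 →
        coeff (Finsupp.single y 1) h ≠ 0 →
        coeff (Finsupp.single x 1 + Finsupp.single y 1) f ≠ 0 := by
      intro x y hxy hAx hBy
      rw [hgh, coeff_mul_hom1_pair hg1 hh1 hxy, hsq y hBy, zero_mul, add_zero]
      exact mul_ne_zero hAx hBy
    have hmain : ∃ n k : ℕ, n % 2 = 0 ∧ coeff (Mon n k) f ≠ 0 ∧ coeff (Mon (n + 1) k) f ≠ 0 ∧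
        (1 ≤ n ∨ (n = 0 ∧ ∀ k', coeff (Mon 2 k') f = 0)) := by
      by_cases hex : ∃ n k, 2 ≤ n ∧ coeff (Mon n k) f ≠ 0
      · obtain ⟨n, k, hn2, hne⟩ := hex
        rcases Nat.even_or_odd n with he | ho
        · have hpar : n % 2 = 0 := Nat.even_iff.mp he
          exact ⟨n, k, hpar, hne, by rw [← factB n k hpar]; exact hne, Or.inl (by omega)⟩
        · have hpar : (n - 1) % 2 = 0 := by
            have := Nat.odd_iff.mp ho; omega
          have hn1 : n - 1 + 1 = n := by omega
          refine ⟨n - 1, k, hpar, ?_, ?_, Or.inl (by omega)⟩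
          · rw [factB (n - 1) k hpar, hn1]; exact hne
          · rw [hn1]; exact hne
      · push_neg at hex
        obtain ⟨D, hD⟩ := MvPolynomial.ne_zero_iff.mp hf0
        obtain ⟨n, k, rfl⟩ := factA D hD
        have hn1 : n ≤ 1 := by
          by_contra hh
          exact hD (hex n k (by omega))
        have hzero2 : ∀ k', coeff (Mon 2 k') f = 0 := fun k' => hex 2 k' (le_refl 2)
        interval_cases n
        · exact ⟨0, k, rfl, hD, by rw [← factB 0 k rfl]; exact hD, Or.inr ⟨rfl, hzero2⟩⟩
        · exact ⟨0, k, rfl, by rw [factB 0 k rfl]; exact hD, hD, Or.inr ⟨rfl, hzero2⟩⟩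
    obtain ⟨n, k, hpar, hE0, hE1, hside⟩ := hmain
    have hP : (1 : ℕ) ≤ 2 ^ n := Nat.one_le_two_pow
    have hps1 : (2 : ℕ) ^ (n + 1) = 2 * 2 ^ n := by rw [pow_succ]; ring
    have hps2 : (2 : ℕ) ^ (n + 2) = 4 * 2 ^ n := by rw [pow_succ, pow_succ, ← pow_succ]; ring
    set a := n + 2 ^ n - 1 + k with ha
    set b := n + 2 ^ (n + 1) - 1 + k with hb
    set cc := n + 1 + 2 ^ (n + 1) - 1 + k with hcc
    set dd := n + 1 + 2 ^ (n + 2) - 1 + k with hdd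
    have hMon0 : Mon n k = Finsupp.single a 1 + Finsupp.single b 1 := rfl
    have hMon1 : Mon (n + 1) k = Finsupp.single cc 1 + Finsupp.single dd 1 := rfl
    have hab : b = a + 2 ^ n := (mon_idx n k).symm
    have hcc' : cc = a + 2 ^ n + 1 := by omega
    have hdd' : dd = a + 3 * 2 ^ n + 1 := by omega
    have decode : ∀ s t : ℕ, s < t → coeff (Finsupp.single s 1 + Finsupp.single t 1) f ≠ 0 →
        ∃ n' k', t = s + 2 ^ n' ∧ Finsupp.single s 1 + Finsupp.single t 1 = Mon n' k' := by
      intro s t hst hne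
      obtain ⟨n', k', hD⟩ := factA _ hne
      have hidx := mon_idx n' k'
      have hp' : (1 : ℕ) ≤ 2 ^ n' := Nat.one_le_two_pow
      have hD' := hD
      rw [Mon_def] at hD'
      obtain ⟨e1, e2⟩ := pair_eq hst (by omega) hD'
      exact ⟨n', k', by omega, hD⟩
    have N2 : coeff (Finsupp.single b 1 + Finsupp.single dd 1) f = 0 := by
      by_contra hne
      obtain ⟨n', k', hgap, -⟩ := decode b dd (by omega) hne
      have := pow_ne_two_mul_add_one n' (2 ^ n) hP
      omega
    have N1 : coeff (Finsupp.single a 1 + Finsupp.single dd 1) f = 0 := by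
      by_contra hne
      obtain ⟨n', k', hgap, hDeq⟩ := decode a dd (by omega) hne
      rcases hside with hn1 | ⟨hn0, hzero2⟩
      · obtain ⟨n0, rfl⟩ : ∃ n0, n = n0 + 1 := ⟨n - 1, by omega⟩
        have hq : (2 : ℕ) ^ (n0 + 1) = 2 * 2 ^ n0 := by rw [pow_succ]; ring
        have hq1 : (1 : ℕ) ≤ 2 ^ n0 := Nat.one_le_two_pow
        have := pow_ne_two_mul_add_one n' (3 * 2 ^ n0) (by omega)
        omega
      · subst hn0
        have h4 : (2 : ℕ) ^ n' = 4 := by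
          norm_num at hdd'
          omega
        have hn'2 : n' = 2 := by
          have : (2 : ℕ) ^ n' = 2 ^ 2 := by rw [h4]; norm_num
          exact Nat.pow_right_injective (le_refl 2) this
        subst hn'2
        rw [hDeq] at hne
        exact hne (hzero2 k')
    have hE1' : coeff (Finsupp.single cc 1) g * coeff (Finsupp.single dd 1) h ≠ 0 ∨
        coeff (Finsupp.single dd 1) g * coeff (Finsupp.single cc 1) h ≠ 0 := by
      rw [hMon1, hgh, coeff_mul_hom1_pair hg1 hh1 (show cc ≠ dd by omega)] at hE1
      by_contra hcontra
      push_neg at hcontra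
      exact hE1 (by rw [hcontra.1, hcontra.2, add_zero])
    have hE0' : coeff (Finsupp.single a 1) g * coeff (Finsupp.single b 1) h ≠ 0 ∨
        coeff (Finsupp.single b 1) g * coeff (Finsupp.single a 1) h ≠ 0 := by
      rw [hMon0, hgh, coeff_mul_hom1_pair hg1 hh1 (show a ≠ b by omega)] at hE0
      by_contra hcontra
      push_neg at hcontra
      exact hE0 (by rw [hcontra.1, hcontra.2, add_zero])
    rcases hE1' with h1 | h1 <;> rcases hE0' with h0 | h0
    · obtain ⟨hAa, -⟩ := mul_ne_zero_iff.mp h0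
      obtain ⟨-, hBdd⟩ := mul_ne_zero_iff.mp h1
      exact edge a dd (by omega) hAa hBdd N1
    · obtain ⟨hAb, -⟩ := mul_ne_zero_iff.mp h0
      obtain ⟨-, hBdd⟩ := mul_ne_zero_iff.mp h1
      exact edge b dd (by omega) hAb hBdd N2
    · obtain ⟨-, hBb⟩ := mul_ne_zero_iff.mp h0
      obtain ⟨hAdd, -⟩ := mul_ne_zero_iff.mp h1
      have := edge dd b (by omega) hAdd hBb
      rw [add_comm] at this
      exact this N2
    · obtain ⟨-, hBa⟩ := mul_ne_zero_iff.mp h0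
      obtain ⟨hAdd, -⟩ := mul_ne_zero_iff.mp h1
      have := edge dd a (by omega) hAdd hBa
      rw [add_comm] at this
      exact this N1
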